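/- Let M = {M_x} be a POVM on ℂ^d. Then the matrix representation C_M = Σ_x vec(M_x)·vec(M_x)†/Tr[M_x] of its measurement information channel is positive semidefinite, has operator norm at most 1, and trace norm Tr[C_M] equal to Σ_x Tr[M_x²]/Tr[M_x]. -/

import Mathlib

open Matrix
open scoped ComplexOrder

/-- Column-stacking vectorization: `vec(|i⟩⟨j|) = |j⟩⊗|i⟩`, i.e. `vec(M) (j,i) = M i j`. -/
def vec {d : ℕ} (M : Matrix (Fin d) (Fin d) ℂ) : Fin d × Fin d → ℂ :=
  fun p => M p.2 p.1

/-- Matrix representation `C_M = Σ_x vec(M_x)vec(M_x)†/Tr[M_x]` of the measurement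
information channel of a POVM `{M_x}`. -/
noncomputable def micMatrix {d : ℕ} {X : Type*} [Fintype X]
    (M : X → Matrix (Fin d) (Fin d) ℂ) : Matrix (Fin d × Fin d) (Fin d × Fin d) ℂ :=
  fun p q => ∑ x, _root_.vec (M x) p * star (_root_.vec (M x) q) / (M x).trace

namespace MicAux

variable {d : ℕ}

open scoped MatrixOrder in
/-- square root of a positive semidefinite matrix -/
noncomputable def _root_.Matrix.PosSemidef.sqrt {A : Matrix (Fin d) (Fin d) ℂ} (_hA : A.PosSemidef) :
    Matrix (Fin d) (Fin d) ℂ :=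
  CFC.sqrt A

open scoped MatrixOrder in
lemma _root_.Matrix.PosSemidef.posSemidef_sqrt {A : Matrix (Fin d) (Fin d) ℂ} (hA : A.PosSemidef) :
    hA.sqrt.PosSemidef :=
  (CFC.sqrt_nonneg A).posSemidef

open scoped MatrixOrder in
lemma _root_.Matrix.PosSemidef.sqrt_mul_self {A : Matrix (Fin d) (Fin d) ℂ} (hA : A.PosSemidef) :
    hA.sqrt * hA.sqrt = A :=
  CFC.sqrt_mul_sqrt_self A hA.nonneg

lemma trace_hermAux (A B : Matrix (Fin d) (Fin d) ℂ) :
    (Aᴴ * B).trace = ∑ p : Fin d × Fin d, starRingEnd ℂ (A p.1 p.2) * B p.1 p.2 := by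
  rw [Matrix.trace, Fintype.sum_prod_type]
  simp only [Matrix.diag_apply, Matrix.mul_apply, Matrix.conjTranspose_apply]
  exact Finset.sum_comm

lemma normSq_sum_le (a b : Fin d × Fin d → ℂ) :
    Complex.normSq (∑ p, starRingEnd ℂ (a p) * b p) ≤
      (∑ p, Complex.normSq (a p)) * (∑ p, Complex.normSq (b p)) := by
  set a' : EuclideanSpace ℂ (Fin d × Fin d) := (WithLp.equiv 2 _).symm a with ha'
  set b' : EuclideanSpace ℂ (Fin d × Fin d) := (WithLp.equiv 2 _).symm b with hb'
  have hinner : (inner ℂ a' b' : ℂ) = ∑ p, starRingEnd ℂ (a p) * b p := by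
    simp [PiLp.inner_apply, RCLike.inner_apply, ha', hb', mul_comm]
  have hna : ‖a'‖ ^ 2 = ∑ p, Complex.normSq (a p) := by
    rw [EuclideanSpace.norm_eq, Real.sq_sqrt (by positivity)]
    simp [Complex.normSq_eq_norm_sq, ha']
  have hnb : ‖b'‖ ^ 2 = ∑ p, Complex.normSq (b p) := by
    rw [EuclideanSpace.norm_eq, Real.sq_sqrt (by positivity)]
    simp [Complex.normSq_eq_norm_sq, hb']
  have h := norm_inner_le_norm (𝕜 := ℂ) a' b'
  have h2 : ‖(inner ℂ a' b' : ℂ)‖ ^ 2 ≤ (‖a'‖ * ‖b'‖) ^ 2 :=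
    pow_le_pow_left₀ (norm_nonneg _) h 2
  rw [mul_pow, hna, hnb] at h2
  calc Complex.normSq (∑ p, starRingEnd ℂ (a p) * b p)
      = ‖(inner ℂ a' b' : ℂ)‖ ^ 2 := by
        rw [hinner, Complex.normSq_eq_norm_sq]
    _ ≤ _ := h2

lemma trace_real (A : Matrix (Fin d) (Fin d) ℂ) (hA : A.IsHermitian) :
    A.trace = (A.trace.re : ℂ) := by
  have h1 : starRingEnd ℂ A.trace = A.trace := by
    rw [show (starRingEnd ℂ) A.trace = star A.trace from rfl, ← Matrix.trace_conjTranspose, hA.eq]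
  exact (Complex.conj_eq_iff_re.mp h1).symm

lemma trace_re_eq (A : Matrix (Fin d) (Fin d) ℂ) (hA : A.PosSemidef) :
    A.trace.re = ∑ p : Fin d × Fin d, Complex.normSq (hA.sqrt p.1 p.2) := by
  have hSH : hA.sqrtᴴ = hA.sqrt := hA.posSemidef_sqrt.1.eq
  have hfact : A = hA.sqrtᴴ * hA.sqrt := by rw [hSH, hA.sqrt_mul_self]
  have : A.trace = ∑ p : Fin d × Fin d, (Complex.normSq (hA.sqrt p.1 p.2) : ℂ) := by
    conv_lhs => rw [hfact]
    rw [trace_hermAux]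
    refine Finset.sum_congr rfl fun p _ => ?_
    rw [mul_comm, Complex.mul_conj]
  rw [this]
  push_cast
  simp

lemma trace_re_nonneg (A : Matrix (Fin d) (Fin d) ℂ) (hA : A.PosSemidef) :
    0 ≤ A.trace.re := by
  rw [trace_re_eq A hA]
  exact Finset.sum_nonneg fun p _ => Complex.normSq_nonneg _

lemma key (A V : Matrix (Fin d) (Fin d) ℂ) (hA : A.PosSemidef) :
    Complex.normSq ((A * V).trace) ≤ A.trace.re * ((Vᴴ * (A * V)).trace).re ∧
      0 ≤ ((Vᴴ * (A * V)).trace).re := by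
  have hSH : hA.sqrtᴴ = hA.sqrt := hA.posSemidef_sqrt.1.eq
  have hfact : A * V = hA.sqrtᴴ * (hA.sqrt * V) := by
    rw [hSH, ← Matrix.mul_assoc, hA.sqrt_mul_self]
  have h1 : (A * V).trace =
      ∑ p : Fin d × Fin d, starRingEnd ℂ (hA.sqrt p.1 p.2) * (hA.sqrt * V) p.1 p.2 := by
    rw [hfact, trace_hermAux]
  have he : Vᴴ * (A * V) = (hA.sqrt * V)ᴴ * (hA.sqrt * V) := by
    rw [Matrix.conjTranspose_mul, hSH, Matrix.mul_assoc, ← Matrix.mul_assoc hA.sqrt,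
      hA.sqrt_mul_self]
  have h3 : ((Vᴴ * (A * V)).trace).re =
      ∑ p : Fin d × Fin d, Complex.normSq ((hA.sqrt * V) p.1 p.2) := by
    have : (Vᴴ * (A * V)).trace =
        ∑ p : Fin d × Fin d, (Complex.normSq ((hA.sqrt * V) p.1 p.2) : ℂ) := by
      rw [he, trace_hermAux]
      refine Finset.sum_congr rfl fun p _ => ?_
      rw [mul_comm, Complex.mul_conj]
    rw [this]
    push_cast
    simp
  refine ⟨?_, by rw [h3]; exact Finset.sum_nonneg fun p _ => Complex.normSq_nonneg _⟩
  rw [h1, trace_re_eq A hA, h3]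
  exact normSq_sum_le _ _

lemma isPositive_of_posSemidef {n : Type*} [Fintype n] [DecidableEq n]
    {A : Matrix n n ℂ} (hA : A.PosSemidef) :
    (Matrix.toEuclideanCLM (𝕜 := ℂ) A).IsPositive := by
  rw [ContinuousLinearMap.isPositive_def']
  constructor
  · rw [isSelfAdjoint_iff, ← map_star]
    congr 1
    rw [Matrix.star_eq_conjTranspose, hA.1.eq]
  · intro x
    have h := hA.dotProduct_mulVec_nonneg (fun j => x j)
    rw [Complex.le_def] at h
    have happ : ∀ i, (Matrix.toEuclideanCLM (𝕜 := ℂ) A x) i = A.mulVec (fun j => x j) i := by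
      intro i
      have := congrFun (Matrix.ofLp_toEuclideanCLM (𝕜 := ℂ) A x) i
      simpa [Matrix.toLin'_apply] using this
    have hip : (inner ℂ (Matrix.toEuclideanCLM (𝕜 := ℂ) A x) x : ℂ) =
        starRingEnd ℂ (dotProduct (star (fun j => x j)) (A.mulVec (fun j => x j))) := by
      rw [PiLp.inner_apply]
      rw [dotProduct, map_sum]
      refine Finset.sum_congr rfl fun i _ => ?_
      simp [RCLike.inner_apply, happ i, mul_comm]
    rw [ContinuousLinearMap.reApplyInnerSelf_apply]
    have : RCLike.re (inner ℂ (Matrix.toEuclideanCLM (𝕜 := ℂ) A x) x : ℂ) =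
        (dotProduct (star (fun j => x j)) (A.mulVec (fun j => x j))).re := by
      rw [hip]
      simp [Complex.conj_re]
    rw [this]
    simpa using h.1

end MicAux

open MicAux in
theorem micMatrix_posSemidef_opNorm_trace {d : ℕ} {X : Type*} [Fintype X]
    (M : X → Matrix (Fin d) (Fin d) ℂ)
    (hpsd : ∀ x, (M x).PosSemidef) (hsum : ∑ x, M x = 1) :
    (micMatrix M).PosSemidef ∧
    ‖Matrix.toEuclideanCLM (𝕜 := ℂ) (micMatrix M)‖ ≤ 1 ∧
    (micMatrix M).trace = ∑ x, (M x * M x).trace / (M x).trace := by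
  classical
  have htr : ∀ x, (M x).trace = ((((M x).trace).re : ℝ) : ℂ) := fun x =>
    trace_real _ (hpsd x).1
  have hτ0 : ∀ x, 0 ≤ ((M x).trace).re := fun x => trace_re_nonneg _ (hpsd x)
  -- the quadratic form of micMatrix
  have hQF : ∀ v : (Fin d × Fin d) → ℂ,
      dotProduct (star v) ((micMatrix M).mulVec v) =
        ∑ x, starRingEnd ℂ (∑ p : Fin d × Fin d, starRingEnd ℂ (_root_.vec (M x) p) * v p) *
          (∑ p : Fin d × Fin d, starRingEnd ℂ (_root_.vec (M x) p) * v p) / (M x).trace := by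
    intro v
    have rhs_eq : ∀ x : X, starRingEnd ℂ (∑ p : Fin d × Fin d, starRingEnd ℂ (_root_.vec (M x) p) * v p) *
            (∑ p : Fin d × Fin d, starRingEnd ℂ (_root_.vec (M x) p) * v p) / (M x).trace
        = ∑ p : Fin d × Fin d, ∑ q : Fin d × Fin d,
            starRingEnd ℂ (v p) * (_root_.vec (M x) p * starRingEnd ℂ (_root_.vec (M x) q) / (M x).trace * v q) := by
      intro x
      rw [map_sum, Finset.sum_mul_sum, Finset.sum_div]
      refine Finset.sum_congr rfl fun p _ => ?_
      rw [Finset.sum_div]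
      refine Finset.sum_congr rfl fun q _ => ?_
      simp only [_root_.map_mul, starRingEnd_self_apply]
      ring
    simp only [rhs_eq]
    simp only [dotProduct, Matrix.mulVec, micMatrix, Finset.sum_mul, Finset.mul_sum,
      Pi.star_apply]
    simp only [starRingEnd_apply]
    calc (∑ p : Fin d × Fin d, ∑ q : Fin d × Fin d, ∑ x : X,
            star (v p) * (_root_.vec (M x) p * star (_root_.vec (M x) q) / (M x).trace * v q))
        = ∑ p : Fin d × Fin d, ∑ x : X, ∑ q : Fin d × Fin d,
            star (v p) * (_root_.vec (M x) p * star (_root_.vec (M x) q) / (M x).trace * v q) :=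
          Finset.sum_congr rfl fun p _ => Finset.sum_comm
      _ = ∑ x : X, ∑ p : Fin d × Fin d, ∑ q : Fin d × Fin d,
            star (v p) * (_root_.vec (M x) p * star (_root_.vec (M x) q) / (M x).trace * v q) :=
          Finset.sum_comm
  -- positivity of micMatrix
  have hherm : (micMatrix M).IsHermitian := by
    refine Matrix.IsHermitian.ext fun p q => ?_
    simp only [micMatrix, star_sum, star_div₀, StarMul.star_mul, star_star]
    refine Finset.sum_congr rfl fun x _ => ?_
    rw [htr x]
    rw [show star ((((M x).trace).re : ℝ) : ℂ) = ((((M x).trace).re : ℝ) : ℂ) from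
      Complex.conj_ofReal _]
  have hCpsd : (micMatrix M).PosSemidef := by
    refine Matrix.posSemidef_iff_dotProduct_mulVec.mpr ⟨hherm, fun v => ?_⟩
    rw [hQF v]
    refine Finset.sum_nonneg fun x _ => ?_
    rw [htr x, mul_comm, Complex.mul_conj, ← Complex.ofReal_div]
    exact Complex.zero_le_real.mpr (div_nonneg (Complex.normSq_nonneg _) (hτ0 x))
  refine ⟨hCpsd, ?_, ?_⟩
  · -- operator norm bound
    have hIpsd : (1 - micMatrix M).PosSemidef := by
      refine Matrix.posSemidef_iff_dotProduct_mulVec.mpr ⟨(Matrix.isHermitian_one).sub hherm, fun v => ?_⟩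
      rw [Matrix.sub_mulVec, dotProduct_sub, Matrix.one_mulVec, sub_nonneg, hQF v]
      set V : Matrix (Fin d) (Fin d) ℂ := Matrix.of (fun i j => v (j, i)) with hV
      have hzV : ∀ x, (∑ p : Fin d × Fin d, starRingEnd ℂ (_root_.vec (M x) p) * v p)
          = ((M x) * V).trace := by
        intro x
        conv_rhs => rw [show M x * V = (M x)ᴴ * V by rw [(hpsd x).1.eq]]
        rw [trace_hermAux]
        refine Fintype.sum_equiv (Equiv.prodComm _ _) _ _ fun p => ?_
        simp [_root_.vec, hV]
      have hL : (∑ x, starRingEnd ℂ (∑ p : Fin d × Fin d, starRingEnd ℂ (_root_.vec (M x) p) * v p) *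
            (∑ p : Fin d × Fin d, starRingEnd ℂ (_root_.vec (M x) p) * v p) / (M x).trace)
          = ((∑ x, Complex.normSq (((M x) * V).trace) / ((M x).trace).re : ℝ) : ℂ) := by
        push_cast
        refine Finset.sum_congr rfl fun x _ => ?_
        rw [hzV x, mul_comm, Complex.mul_conj, htr x]
        simp
      have hR : dotProduct (star v) v
          = ((∑ p : Fin d × Fin d, Complex.normSq (v p) : ℝ) : ℂ) := by
        rw [dotProduct]
        push_cast
        refine Finset.sum_congr rfl fun p _ => ?_
        rw [Pi.star_apply, Complex.star_def, mul_comm, Complex.mul_conj]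
      rw [hL, hR, Complex.real_le_real]
      have hs : ∀ x, 0 ≤ ((Vᴴ * (M x * V)).trace).re := fun x => (key (M x) V (hpsd x)).2
      have hsum_s : ∑ x, ((Vᴴ * (M x * V)).trace).re
          = ∑ p : Fin d × Fin d, Complex.normSq (v p) := by
        have h1 : ∑ x, Vᴴ * (M x * V) = Vᴴ * V := by
          calc ∑ x, Vᴴ * (M x * V) = Vᴴ * ∑ x, (M x * V) := by rw [Finset.mul_sum]
            _ = Vᴴ * ((∑ x, M x) * V) := by rw [← Finset.sum_mul]
            _ = Vᴴ * V := by rw [hsum, one_mul]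
        calc ∑ x, ((Vᴴ * (M x * V)).trace).re = ((∑ x, Vᴴ * (M x * V)).trace).re := by
              rw [Matrix.trace_sum, Complex.re_sum]
          _ = ((Vᴴ * V).trace).re := by rw [h1]
          _ = ∑ p : Fin d × Fin d, Complex.normSq (v p) := by
              have h2 : (Vᴴ * V).trace
                  = ((∑ p : Fin d × Fin d, Complex.normSq (V p.1 p.2) : ℝ) : ℂ) := by
                rw [trace_hermAux]
                push_cast
                refine Finset.sum_congr rfl fun p _ => ?_
                rw [mul_comm, Complex.mul_conj]
              rw [h2, Complex.ofReal_re]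
              refine Fintype.sum_equiv (Equiv.prodComm _ _) _ _ fun p => ?_
              simp [hV, Prod.swap]
      rw [← hsum_s]
      refine Finset.sum_le_sum fun x _ => ?_
      have hk := (key (M x) V (hpsd x)).1
      rcases (hτ0 x).eq_or_lt with h0 | hpos
      · rw [← h0, div_zero]; exact hs x
      · rw [div_le_iff₀ hpos]
        calc Complex.normSq ((M x * V).trace)
            ≤ ((M x).trace).re * ((Vᴴ * (M x * V)).trace).re := hk
          _ = _ := mul_comm _ _
    set T := Matrix.toEuclideanCLM (𝕜 := ℂ) (micMatrix M) with hT
    have hT0 : (0 : _) ≤ T :=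
      (ContinuousLinearMap.nonneg_iff_isPositive T).mpr (isPositive_of_posSemidef hCpsd)
    have h1T : T ≤ 1 := by
      rw [ContinuousLinearMap.le_def]
      have h := isPositive_of_posSemidef hIpsd
      have he : Matrix.toEuclideanCLM (𝕜 := ℂ) (1 - micMatrix M) = 1 - T := by
        rw [map_sub, _root_.map_one]
      rwa [he] at h
    exact (CStarAlgebra.norm_le_one_iff_of_nonneg T hT0).mpr h1T
  · -- trace formula
    rw [Matrix.trace]
    simp only [Matrix.diag_apply, micMatrix]
    rw [Finset.sum_comm]
    refine Finset.sum_congr rfl fun x _ => ?_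
    rw [← Finset.sum_div]
    congr 1
    conv_rhs => rw [show M x * M x = (M x)ᴴ * M x by rw [(hpsd x).1.eq]]
    rw [trace_hermAux]
    refine Fintype.sum_equiv (Equiv.prodComm _ _) _ _ fun p => ?_
    simp only [Equiv.prodComm_apply, Prod.fst_swap, Prod.snd_swap, _root_.vec]
    rw [mul_comm]
    rfl
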